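/- Let u : ℝ² → ℝ² be C², globally Lipschitz, with divergence ∇·u, and let x̄ : ℝ → ℝ² solve x̄′(p) = u(x̄(p)) with u(x̄(p)) ≠ 0 for every p. Fix p^u < p^d and suppose (closed-interface condition) x̄ is periodic with period p^d − p^u, so a := x̄(p^u) = x̄(p^d), and that w(a,t) = 0 for all t. Define M^u_ε(p,t) := ε ∫_{p^u}^{p} exp(∫_τ^p (∇·u)(x̄(ξ)) dξ) ⟨J u(x̄(τ)), w(x̄(τ), τ + t − p)⟩ dτ for all p ∈ ℝ. Then for every P > 0 there exist C > 0 and ε₀ > 0 such that for all p ∈ [−P, P], all t ∈ ℝ, and all ε ∈ (0, ε₀], |⟨x_ε^u(p,t) − x̄(p), n̂(p)⟩ − M^u_ε(p,t)/|u(x̄(p))|| ≤ C ε². -/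

import Mathlib

open scoped InnerProductSpace NNReal
open Real Set

set_option maxHeartbeats 2000000

noncomputable section

/-- The plane with its Euclidean inner product. -/
abbrev E2 : Type := EuclideanSpace ℝ (Fin 2)

/-- Rotation by +π/2 : J(x₁,x₂) = (−x₂, x₁). -/
noncomputable def Jrot : E2 → E2 :=
  fun x => (WithLp.equiv 2 (Fin 2 → ℝ)).symm ![-(x 1), x 0]

/-- Divergence of a planar vector field, as the trace of its Fréchet derivative. -/
noncomputable def div2 (u : E2 → E2) (x : E2) : ℝ :=
  LinearMap.trace ℝ E2 (fderiv ℝ u x).toLinearMap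

/-- The leading-order upstream streakline displacement function (closed interface). -/
noncomputable def MuClosed (u : E2 → E2) (xbar : ℝ → E2) (w : E2 → ℝ → E2)
    (pu ε p t : ℝ) : ℝ :=
  ε * ∫ τ in pu..p,
    Real.exp (∫ ξ in τ..p, div2 u (xbar ξ)) *
      ⟪Jrot (u (xbar τ)), w (xbar τ) (τ + t - p)⟫_ℝ

/-! ### Auxiliary lemmas -/

lemma Jrot_apply0 (x : E2) : Jrot x 0 = -(x 1) := rfl
lemma Jrot_apply1 (x : E2) : Jrot x 1 = x 0 := rfl

lemma inner_E2 (x y : E2) : ⟪x, y⟫_ℝ = x 0 * y 0 + x 1 * y 1 := by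
  simp [PiLp.inner_apply, Fin.sum_univ_two]
  ring

def e2 (i : Fin 2) : E2 := EuclideanSpace.single i 1

lemma decomp_E2 (v : E2) : v = v 0 • e2 0 + v 1 • e2 1 := by
  ext i; fin_cases i <;> simp [e2, EuclideanSpace.single_apply]

lemma apply_coord (A : E2 →L[ℝ] E2) (v : E2) (i : Fin 2) :
    A v i = v 0 * A (e2 0) i + v 1 * A (e2 1) i := by
  conv_lhs => rw [decomp_E2 v]
  simp

lemma trace_formula (A : E2 →L[ℝ] E2) :
    LinearMap.trace ℝ E2 A.toLinearMap = A (e2 0) 0 + A (e2 1) 1 := by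
  rw [LinearMap.trace_eq_matrix_trace ℝ (EuclideanSpace.basisFun (Fin 2) ℝ).toBasis]
  simp [Matrix.trace, Matrix.diag, LinearMap.toMatrix_apply, Fin.sum_univ_two, e2]

lemma adjoint_identity (A : E2 →L[ℝ] E2) (tr : ℝ)
    (htr : tr = A (e2 0) 0 + A (e2 1) 1) (v z : E2) :
    ⟪A v, Jrot z⟫_ℝ + ⟪v, Jrot (A z)⟫_ℝ = tr * ⟪v, Jrot z⟫_ℝ := by
  rw [inner_E2, inner_E2, inner_E2, Jrot_apply0, Jrot_apply1, Jrot_apply0, Jrot_apply1,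
    apply_coord A v 0, apply_coord A v 1, apply_coord A z 0, apply_coord A z 1, htr]
  ring

lemma norm_Jrot (x : E2) : ‖Jrot x‖ = ‖x‖ := by
  simp [EuclideanSpace.norm_eq, Fin.sum_univ_two, Jrot_apply0, Jrot_apply1]
  ring_nf

noncomputable def JL : E2 →L[ℝ] E2 :=
  LinearMap.toContinuousLinearMap
    { toFun := Jrot
      map_add' := by
        intro a b; ext i; fin_cases i <;> simp [Jrot_apply0, Jrot_apply1] <;> ring
      map_smul' := by
        intro c a; ext i; fin_cases i <;>
          simp [Jrot_apply0, Jrot_apply1] }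

lemma JL_eq (x : E2) : JL x = Jrot x := rfl

lemma continuous_div2 {u : E2 → E2} (hu : ContDiff ℝ 2 u) : Continuous (div2 u) := by
  have h : Continuous (fderiv ℝ u) := hu.continuous_fderiv (by norm_num)
  have hc : ∀ (v : E2) (i : Fin 2), Continuous fun x => (fderiv ℝ u x) v i := by
    intro v i
    exact (continuous_apply i).comp ((PiLp.continuous_ofLp 2 _).comp (((ContinuousLinearMap.apply ℝ E2 v).continuous).comp h))
  have : div2 u = fun x => (fderiv ℝ u x) (e2 0) 0 + (fderiv ℝ u x) (e2 1) 1 :=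
    funext fun x => trace_formula _
  rw [this]
  exact (hc (e2 0) 0).add (hc (e2 1) 1)

lemma second_order_bound {u : E2 → E2} (hu : ContDiff ℝ 2 u) {M₂ : ℝ} {x : E2}
    (hM : ∀ ξ ∈ Metric.closedBall x 1, ‖fderiv ℝ (fderiv ℝ u) ξ‖ ≤ M₂) {y : E2}
    (hy : ‖y‖ ≤ 1) :
    ‖u (x + y) - u x - fderiv ℝ u x y‖ ≤ M₂ * ‖y‖ ^ 2 := by
  have hdu : ContDiff ℝ 1 (fderiv ℝ u) := hu.fderiv_right (le_refl 2)
  have hdu' : ∀ ξ : E2, HasFDerivAt (fderiv ℝ u) (fderiv ℝ (fderiv ℝ u) ξ) ξ :=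
    fun ξ => (hdu.differentiable (by norm_num) ξ).hasFDerivAt
  have hlip : ∀ ξ ∈ Metric.closedBall x 1, ‖fderiv ℝ u ξ - fderiv ℝ u x‖ ≤ M₂ * ‖ξ - x‖ := by
    intro ξ hξ
    exact (convex_closedBall x 1).norm_image_sub_le_of_norm_hasFDerivWithin_le
      (fun ζ hζ => (hdu' ζ).hasFDerivWithinAt) hM (Metric.mem_closedBall_self zero_le_one) hξ
  have hsub : Metric.closedBall x ‖y‖ ⊆ Metric.closedBall x 1 :=
    Metric.closedBall_subset_closedBall hy
  have key := (convex_closedBall x ‖y‖).norm_image_sub_le_of_norm_hasFDerivWithin_le'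
    (f := u) (f' := fderiv ℝ u) (φ := fderiv ℝ u x) (C := M₂ * ‖y‖)
    (fun ζ hζ => ((hu.differentiable (by norm_num) ζ).hasFDerivAt).hasFDerivWithinAt)
    (fun ζ hζ => by
      have h1 := hlip ζ (hsub hζ)
      have h2 : ‖ζ - x‖ ≤ ‖y‖ := by simpa [dist_eq_norm] using hζ
      have hM0 : 0 ≤ M₂ := le_trans (norm_nonneg (fderiv ℝ (fderiv ℝ u) x)) (hM x (Metric.mem_closedBall_self zero_le_one))
      nlinarith)
    (Metric.mem_closedBall_self (norm_nonneg y))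
    (show x + y ∈ Metric.closedBall x ‖y‖ by simp [Metric.mem_closedBall, dist_eq_norm])
  simpa [add_sub_cancel_left, sq, mul_assoc] using key

lemma gronwall_two_sided {E : Type*} [NormedAddCommGroup E] [NormedSpace ℝ E]
    {f f' : ℝ → E} {K ε : ℝ} (hK : 0 < K) (hε : 0 ≤ ε)
    (hd : ∀ s : ℝ, HasDerivAt f (f' s) s)
    {a b : ℝ}
    (hb : ∀ s ∈ uIcc a b, ‖f' s‖ ≤ K * ‖f s‖ + ε)
    (h0 : f a = 0) :
    ∀ x ∈ uIcc a b, ‖f x‖ ≤ ε / K * (Real.exp (K * |b - a|) - 1) := by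
  have key : ∀ (F F' : ℝ → E), (∀ s : ℝ, HasDerivAt F (F' s) s) → F a = 0 →
      ∀ c : ℝ, a ≤ c → (∀ s ∈ Icc a c, ‖F' s‖ ≤ K * ‖F s‖ + ε) →
      ∀ x ∈ Icc a c, ‖F x‖ ≤ ε / K * (Real.exp (K * (c - a)) - 1) := by
    intro F F' hdF h0F c hac hbnd x hx
    have h := norm_le_gronwallBound_of_norm_deriv_right_le (f := F) (f' := F')
      (a := a) (b := c) (δ := 0)
      (fun s _ => (hdF s).continuousAt.continuousWithinAt)
      (fun s _ => (hdF s).hasDerivWithinAt)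
      (by simp [h0F]) (fun s hs => hbnd s (Ico_subset_Icc_self hs)) x hx
    rw [gronwallBound_of_K_ne_0 hK.ne'] at h
    refine h.trans ?_
    simp only [zero_mul, zero_add]
    have h1 : Real.exp (K * (x - a)) ≤ Real.exp (K * (c - a)) :=
      Real.exp_le_exp.2 (by nlinarith [hx.1, hx.2])
    have : 0 ≤ ε / K := div_nonneg hε hK.le
    nlinarith
  rcases le_total a b with hab | hba
  · intro x hx
    rw [uIcc_of_le hab] at hx hb
    rw [abs_of_nonneg (by linarith : (0:ℝ) ≤ b - a)]
    exact key f f' hd h0 b hab hb x hx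
  · intro x hx
    rw [uIcc_of_ge hba] at hx hb
    set g : ℝ → E := fun s => f (2 * a - s) with hg
    have hdg : ∀ s : ℝ, HasDerivAt g (-f' (2 * a - s)) s := by
      intro s
      have h1 : HasDerivAt (fun s : ℝ => 2 * a - s) (-1) s := by
        simpa using ((hasDerivAt_id s).const_sub (2 * a))
      have := (hd (2 * a - s)).scomp s h1
      simpa [Function.comp_def, hg] using this
    have hbg : ∀ s ∈ Icc a (2 * a - b), ‖(fun s => -f' (2 * a - s)) s‖ ≤ K * ‖g s‖ + ε := by
      intro s hs
      simp only [norm_neg]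
      exact hb (2 * a - s) ⟨by linarith [hs.2], by linarith [hs.1]⟩
    have h2ab : a ≤ 2 * a - b := by linarith
    have h0g : g a = 0 := by simp [hg, show 2 * a - a = a by ring, h0]
    have hx' : 2 * a - x ∈ Icc a (2 * a - b) := ⟨by linarith [hx.2], by linarith [hx.1]⟩
    have := key g _ hdg h0g (2 * a - b) h2ab hbg (2 * a - x) hx'
    have hgx : g (2 * a - x) = f x := by simp [hg, show 2 * a - (2 * a - x) = x by ring]
    rw [hgx] at this
    refine this.trans (le_of_eq ?_)
    rw [show 2 * a - b - a = a - b by ring, abs_of_nonpos (by linarith)]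
    ring_nf

/-- **Upstream streakline theorem, closed interface.**  For a steady C² globally
Lipschitz planar field `u` with a nonvanishing periodic streakline `x̄` of
period `pd − pu`, and a bounded C¹ agitation `w` vanishing at the anchor point
`a = x̄(pu) = x̄(pd)`, the normal displacement of the agitated upstream
streakline `x_ε^u(p,t)` from `x̄(p)` equals `M^u_ε(p,t)/|u(x̄(p))|` up to an
error of order `ε²`, uniformly for `p ∈ [−P,P]` and `t ∈ ℝ`. -/
theorem upstream_streakline_closed
    (u : E2 → E2) (hu : ContDiff ℝ 2 u)
    (K : ℝ≥0) (huLip : LipschitzWith K u)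
    (xbar : ℝ → E2) (hxbar : ∀ p : ℝ, HasDerivAt xbar (u (xbar p)) p)
    (hune : ∀ p : ℝ, u (xbar p) ≠ 0)
    (pu pd : ℝ) (hpp : pu < pd)
    (hper : Function.Periodic xbar (pd - pu))
    (w : E2 → ℝ → E2) (hw : ContDiff ℝ 1 (Function.uncurry w))
    (Cw : ℝ) (hwbdd : ∀ (x : E2) (t : ℝ), ‖w x t‖ ≤ Cw)
    (Kw : ℝ≥0) (hwLip : ∀ t : ℝ, LipschitzWith Kw (fun x => w x t))
    (hanchor : ∀ t : ℝ, w (xbar pu) t = 0) :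
    ∀ P > (0:ℝ), ∃ C > (0:ℝ), ∃ ε₀ > (0:ℝ),
      ∀ p ∈ Set.Icc (-P) P, ∀ t : ℝ, ∀ ε ∈ Set.Ioc (0:ℝ) ε₀,
        ∀ X : ℝ → E2,
          (∀ s : ℝ, HasDerivAt X (u (X s) + ε • w (X s) s) s) →
          X (t - p + pu) = xbar pu →
          |⟪X t - xbar p, (‖u (xbar p)‖)⁻¹ • Jrot (u (xbar p))⟫_ℝ
            - MuClosed u xbar w pu ε p t / ‖u (xbar p)‖| ≤ C * ε ^ 2 := by
  intro P hP
  -- basic continuity facts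
  have hxc : Continuous xbar := by
    refine continuous_iff_continuousAt.2 fun q => (hxbar q).continuousAt
  have huc : Continuous u := hu.continuous
  have hwc : Continuous (Function.uncurry w) := hw.continuous
  have hCw0 : (0:ℝ) ≤ Cw := le_trans (norm_nonneg _) (hwbdd (xbar pu) 0)
  -- the compact window
  set A : ℝ := |pu| + P with hA
  have hA0 : 0 < A := by positivity
  set S : Set ℝ := Icc (-A) A with hSdef
  have hS : IsCompact S := isCompact_Icc
  have hSne : S.Nonempty := ⟨0, by constructor <;> [linarith [abs_nonneg pu]; linarith [abs_nonneg pu]]⟩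
  have hpuS : pu ∈ S := by
    constructor <;> [linarith [neg_abs_le pu]; linarith [le_abs_self pu]]
  have hpuS' : -A ≤ pu ∧ pu ≤ A := hpuS
  have hIccS : ∀ a b : ℝ, a ∈ S → b ∈ S → uIcc a b ⊆ S := by
    intro a b ha hb
    rw [hSdef, uIcc]
    exact Icc_subset_Icc (le_inf ha.1 hb.1) (sup_le ha.2 hb.2)
  -- compact neighborhood of the orbit over the window
  set K₀ : Set E2 := xbar '' S with hK₀
  have hK₀c : IsCompact K₀ := hS.image hxc
  set N : Set E2 := Metric.cthickening 1 K₀ with hN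
  have hNc : IsCompact N := hK₀c.cthickening
  -- bound on the second derivative of u near the orbit
  have hcd2 : Continuous (fderiv ℝ (fderiv ℝ u)) :=
    (hu.fderiv_right (m := 1) (le_refl 2)).continuous_fderiv (by norm_num)
  obtain ⟨M₂', hM₂'⟩ := hNc.exists_bound_of_continuousOn (f := fderiv ℝ (fderiv ℝ u)) hcd2.continuousOn
  set M₂ : ℝ := max M₂' 0 with hM₂def
  have hM₂0 : 0 ≤ M₂ := le_max_right _ _
  have hM₂ : ∀ ξ ∈ N, ‖fderiv ℝ (fderiv ℝ u) ξ‖ ≤ M₂ :=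
    fun ξ hξ => le_trans (hM₂' ξ hξ) (le_max_left _ _)
  -- bound on ‖u∘xbar‖ over the window
  obtain ⟨U', hU'⟩ := hS.exists_bound_of_continuousOn (huc.comp hxc).continuousOn
  set U : ℝ := max U' 0 with hUdef
  have hU0 : 0 ≤ U := le_max_right _ _
  have hU : ∀ σ ∈ S, ‖u (xbar σ)‖ ≤ U := fun σ hσ => le_trans (hU' σ hσ) (le_max_left _ _)
  -- bound on the divergence over the window
  have hdvc : Continuous fun σ => div2 u (xbar σ) := (continuous_div2 hu).comp hxc
  obtain ⟨Bd', hBd'⟩ := hS.exists_bound_of_continuousOn hdvc.continuousOn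
  set Bd : ℝ := max Bd' 0 with hBddef
  have hBd0 : 0 ≤ Bd := le_max_right _ _
  have hBd : ∀ σ ∈ S, |div2 u (xbar σ)| ≤ Bd :=
    fun σ hσ => le_trans (hBd' σ hσ) (le_max_left _ _)
  -- positive lower bound on ‖u∘xbar‖ over the window
  obtain ⟨σ₀, hσ₀S, hσ₀min⟩ := hS.exists_isMinOn hSne
    (continuous_norm.comp (huc.comp hxc)).continuousOn
  set m : ℝ := ‖u (xbar σ₀)‖ with hmdef
  have hm0 : 0 < m := norm_pos_iff.2 (hune σ₀)
  have hmle : ∀ σ ∈ S, m ≤ ‖u (xbar σ)‖ := fun σ hσ => hσ₀min hσ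
  -- constants
  set Kp : ℝ := (K : ℝ) + 1 with hKpdef
  have hKp0 : 0 < Kp := by rw [hKpdef]; positivity
  set C₁ : ℝ := Cw / Kp * Real.exp (Kp * A) with hC₁def
  have hC₁0 : 0 ≤ C₁ := by
    rw [hC₁def]
    exact mul_nonneg (div_nonneg hCw0 hKp0.le) (Real.exp_pos _).le
  set B₁ : ℝ := Real.exp (Bd * (2 * A)) with hB₁def
  have hB₁0 : 0 < B₁ := Real.exp_pos _
  set C₃ : ℝ := B₁ * U * (M₂ * C₁ ^ 2 + (Kw : ℝ) * C₁) with hC₃def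
  have hC₃0 : 0 ≤ C₃ := by
    rw [hC₃def]
    exact mul_nonneg (mul_nonneg hB₁0.le hU0)
      (add_nonneg (mul_nonneg hM₂0 (sq_nonneg _)) (mul_nonneg Kw.coe_nonneg hC₁0))
  clear_value A S K₀ N M₂ U Bd m Kp C₁ B₁ C₃
  have hCnn : (0:ℝ) ≤ m⁻¹ * B₁ * (C₃ * A) :=
    mul_nonneg (mul_nonneg (inv_nonneg.2 hm0.le) hB₁0.le) (mul_nonneg hC₃0 hA0.le)
  refine ⟨m⁻¹ * B₁ * (C₃ * A) + 1, by linarith, (C₁ + 1)⁻¹,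
    inv_pos.2 (by linarith), ?_⟩
  intro p hp t ε hε X hX hX0
  have hpS : p ∈ S := by
    rw [hSdef, Set.mem_Icc]
    constructor
    · linarith [hp.1, abs_nonneg pu]
    · linarith [hp.2, abs_nonneg pu]
  have hεpos : 0 < ε := hε.1
  have hεC₁ : ε * C₁ ≤ 1 := by
    have hpos : (0:ℝ) < C₁ + 1 := by linarith
    have h2 : ε * (C₁ + 1) ≤ 1 := by
      have h3 := mul_le_mul_of_nonneg_right hε.2 hpos.le
      rwa [inv_mul_cancel₀ hpos.ne'] at h3
    nlinarith [hεpos.le]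
  -- the deviation from the streakline
  set y : ℝ → E2 := fun σ => X (σ + t - p) - xbar σ with hydef
  clear_value y
  have hy' : ∀ σ : ℝ, HasDerivAt y
      (u (X (σ + t - p)) + ε • w (X (σ + t - p)) (σ + t - p) - u (xbar σ)) σ := by
    intro σ
    rw [hydef]
    have h1 : HasDerivAt (fun σ : ℝ => σ + t - p) 1 σ := by
      simpa using ((hasDerivAt_id σ).add_const t).sub_const p
    have h2 := (hX (σ + t - p)).scomp σ h1
    simpa [Function.comp, Pi.sub_def] using (h2.sub (hxbar σ))
  have hy0 : y pu = 0 := by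
    simp only [hydef]
    rw [show pu + t - p = t - p + pu by ring, hX0, sub_self]
  -- first-order Gronwall estimate
  have hybnd : ∀ σ ∈ uIcc pu p, ‖y σ‖ ≤ ε * C₁ := by
    have hb : ∀ σ ∈ uIcc pu p,
        ‖u (X (σ + t - p)) + ε • w (X (σ + t - p)) (σ + t - p) - u (xbar σ)‖
          ≤ Kp * ‖y σ‖ + ε * Cw := by
      intro σ hσ
      have h1 : ‖u (X (σ + t - p)) - u (xbar σ)‖ ≤ (K : ℝ) * ‖y σ‖ := by
        have := huLip.dist_le_mul (X (σ + t - p)) (xbar σ)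
        simpa [dist_eq_norm, hydef] using this
      have h2 : ‖ε • w (X (σ + t - p)) (σ + t - p)‖ ≤ ε * Cw := by
        rw [norm_smul, Real.norm_eq_abs, abs_of_pos hεpos]
        exact mul_le_mul_of_nonneg_left (hwbdd _ _) hεpos.le
      calc ‖u (X (σ + t - p)) + ε • w (X (σ + t - p)) (σ + t - p) - u (xbar σ)‖
          = ‖(u (X (σ + t - p)) - u (xbar σ)) + ε • w (X (σ + t - p)) (σ + t - p)‖ := by
            rw [add_sub_right_comm]
        _ ≤ ‖u (X (σ + t - p)) - u (xbar σ)‖ + ‖ε • w (X (σ + t - p)) (σ + t - p)‖ :=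
            norm_add_le _ _
        _ ≤ (K : ℝ) * ‖y σ‖ + ε * Cw := add_le_add h1 h2
        _ ≤ Kp * ‖y σ‖ + ε * Cw := by
            have : (K : ℝ) ≤ Kp := by rw [hKpdef]; linarith
            nlinarith [norm_nonneg (y σ)]
    intro σ hσ
    have := gronwall_two_sided hKp0 (mul_nonneg hεpos.le hCw0) hy' hb hy0 σ hσ
    refine this.trans ?_
    have hpp' : |p - pu| ≤ A := by
      rw [abs_le, hA]
      constructor <;> [linarith [hp.1, le_abs_self pu]; linarith [hp.2, neg_abs_le pu]]
    have h3 : Real.exp (Kp * |p - pu|) - 1 ≤ Real.exp (Kp * A) := by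
      have := Real.exp_le_exp.2 (mul_le_mul_of_nonneg_left hpp' hKp0.le)
      linarith
    have h4 : (0:ℝ) ≤ Real.exp (Kp * |p - pu|) - 1 := by
      have : (1:ℝ) ≤ Real.exp (Kp * |p - pu|) :=
        Real.one_le_exp (mul_nonneg hKp0.le (abs_nonneg _))
      linarith
    calc ε * Cw / Kp * (Real.exp (Kp * |p - pu|) - 1)
        ≤ ε * Cw / Kp * Real.exp (Kp * A) := by
          apply mul_le_mul_of_nonneg_left h3 (by
            exact div_nonneg (mul_nonneg hεpos.le hCw0) hKp0.le)
      _ = ε * C₁ := by rw [hC₁def]; ring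
  have hy1 : ∀ σ ∈ uIcc pu p, ‖y σ‖ ≤ 1 := fun σ hσ => (hybnd σ hσ).trans hεC₁
  -- the primitive D of the divergence along the streakline
  set D : ℝ → ℝ := fun σ => ∫ ξ in pu..σ, div2 u (xbar ξ) with hDdef
  clear_value D
  have hD : ∀ σ : ℝ, HasDerivAt D (div2 u (xbar σ)) σ := by
    intro σ
    rw [hDdef]
    exact intervalIntegral.integral_hasDerivAt_right (hdvc.intervalIntegrable _ _)
      (hdvc.stronglyMeasurableAtFilter _ _) hdvc.continuousAt
  have hDc : Continuous D :=
    continuous_iff_continuousAt.2 fun σ => (hD σ).continuousAt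
  have hDbd : ∀ σ ∈ S, |D σ| ≤ Bd * (2 * A) := by
    intro σ hσ
    have h := intervalIntegral.norm_integral_le_of_norm_le_const (C := Bd)
      (f := fun ξ => div2 u (xbar ξ)) (a := pu) (b := σ) ?_
    · rw [hDdef]
      refine le_trans h ?_
      have hσ' : -A ≤ σ ∧ σ ≤ A := by rwa [hSdef, Set.mem_Icc] at hσ
      have h2 : |σ - pu| ≤ 2 * A := by
        rw [abs_le]
        constructor <;> [linarith [hσ'.1, hpuS'.2]; linarith [hσ'.2, hpuS'.1]]
      nlinarith [abs_nonneg (σ - pu)]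
    · intro x hx
      have hx' : x ∈ S := hIccS pu σ hpuS hσ (uIoc_subset_uIcc hx)
      simpa using hBd x hx'
  have hexpD : ∀ σ ∈ S, Real.exp (-D σ) ≤ B₁ := by
    intro σ hσ
    rw [hB₁def]
    exact Real.exp_le_exp.2 (by linarith [(abs_le.1 (hDbd σ hσ)).1])
  have hexpD' : ∀ σ ∈ S, Real.exp (D σ) ≤ B₁ := by
    intro σ hσ
    rw [hB₁def]
    exact Real.exp_le_exp.2 (by linarith [(abs_le.1 (hDbd σ hσ)).2])
  -- the integrand φ
  set φ : ℝ → ℝ := fun τ => Real.exp (-D τ) * ⟪Jrot (u (xbar τ)), w (xbar τ) (τ + t - p)⟫_ℝ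
    with hφdef
  clear_value φ
  have hwcomp : Continuous fun τ : ℝ => w (xbar τ) (τ + t - p) := by
    have h : (fun τ : ℝ => w (xbar τ) (τ + t - p)) =
        Function.uncurry w ∘ fun τ => (xbar τ, τ + t - p) := rfl
    rw [h]
    exact hwc.comp (hxc.prodMk (by continuity))
  have hφc : Continuous φ := by
    rw [hφdef]
    have h1 : Continuous fun τ : ℝ => Real.exp (-D τ) := Real.continuous_exp.comp hDc.neg
    have hJ : Continuous fun τ : ℝ => Jrot (u (xbar τ)) := by
      have h : (fun τ : ℝ => Jrot (u (xbar τ))) = fun τ => JL (u (xbar τ)) := rfl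
      rw [h]
      exact JL.continuous.comp (huc.comp hxc)
    exact h1.mul (hJ.inner hwcomp)
  have hFTC : ∀ b : ℝ, HasDerivAt (fun σ => ∫ τ in pu..σ, φ τ) (φ b) b := fun b =>
    intervalIntegral.integral_hasDerivAt_right (hφc.intervalIntegrable _ _)
      (hφc.stronglyMeasurableAtFilter _ _) hφc.continuousAt
  -- the weighted normal displacement g and its remainder
  set g : ℝ → ℝ := fun σ => Real.exp (-D σ) * ⟪y σ, Jrot (u (xbar σ))⟫_ℝ with hgdef
  clear_value g
  set Rem : ℝ → E2 := fun σ =>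
    (u (X (σ + t - p)) - u (xbar σ) - fderiv ℝ u (xbar σ) (y σ)) +
      ε • (w (X (σ + t - p)) (σ + t - p) - w (xbar σ) (σ + t - p)) with hRemdef
  clear_value Rem
  set r : ℝ → ℝ := fun σ => Real.exp (-D σ) * ⟪Rem σ, Jrot (u (xbar σ))⟫_ℝ with hrdef
  clear_value r
  have hg' : ∀ σ : ℝ, HasDerivAt g (ε * φ σ + r σ) σ := by
    intro σ
    have hexp' : HasDerivAt (fun σ => Real.exp (-D σ)) (Real.exp (-D σ) * (-div2 u (xbar σ))) σ :=
      ((hD σ).neg).exp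
    have hux : HasDerivAt (fun σ => u (xbar σ)) ((fderiv ℝ u (xbar σ)) (u (xbar σ))) σ :=
      ((hu.differentiable (by norm_num) (xbar σ)).hasFDerivAt).comp_hasDerivAt σ (hxbar σ)
    have hJux : HasDerivAt (fun σ => Jrot (u (xbar σ)))
        (JL ((fderiv ℝ u (xbar σ)) (u (xbar σ)))) σ :=
      JL.hasFDerivAt.comp_hasDerivAt σ hux
    have hinner := (hy' σ).inner (𝕜 := ℝ) hJux
    have hgd := hexp'.mul hinner
    rw [hgdef]
    refine hgd.congr_deriv ?_
    have hkey := adjoint_identity (fderiv ℝ u (xbar σ)) (div2 u (xbar σ))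
      (trace_formula (fderiv ℝ u (xbar σ))) (y σ) (u (xbar σ))
    have hsplit : u (X (σ + t - p)) + ε • w (X (σ + t - p)) (σ + t - p) - u (xbar σ)
        = fderiv ℝ u (xbar σ) (y σ) + Rem σ + ε • w (xbar σ) (σ + t - p) := by
      rw [hRemdef]
      module
    have h2 : ⟪u (X (σ + t - p)) + ε • w (X (σ + t - p)) (σ + t - p) - u (xbar σ),
        Jrot (u (xbar σ))⟫_ℝ
        = ⟪fderiv ℝ u (xbar σ) (y σ), Jrot (u (xbar σ))⟫_ℝ + ⟪Rem σ, Jrot (u (xbar σ))⟫_ℝ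
          + ε * ⟪Jrot (u (xbar σ)), w (xbar σ) (σ + t - p)⟫_ℝ := by
      rw [hsplit, inner_add_left, inner_add_left, real_inner_smul_left,
        real_inner_comm (w (xbar σ) (σ + t - p))]
    have h3 : ⟪y σ, JL ((fderiv ℝ u (xbar σ)) (u (xbar σ)))⟫_ℝ
        = ⟪y σ, Jrot ((fderiv ℝ u (xbar σ)) (u (xbar σ)))⟫_ℝ := rfl
    rw [h2, h3]
    simp only [hφdef, hrdef]
    linear_combination (Real.exp (-D σ)) * hkey
  set G : ℝ → ℝ := fun σ => g σ - ε * ∫ τ in pu..σ, φ τ with hGdef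
  clear_value G
  have hG' : ∀ σ : ℝ, HasDerivAt G (r σ) σ := by
    intro σ
    rw [hGdef]
    have h := (hg' σ).sub ((hFTC σ).const_mul ε)
    simpa [Pi.sub_def] using h
  -- bound on the remainder over the window
  have hrb : ∀ σ ∈ uIcc pu p, |r σ| ≤ C₃ * ε ^ 2 := by
    intro σ hσ
    have hσS : σ ∈ S := hIccS pu p hpuS hpS hσ
    have hyb := hybnd σ hσ
    have hRem : ‖Rem σ‖ ≤ M₂ * (ε * C₁) ^ 2 + ε * ((Kw : ℝ) * (ε * C₁)) := by
      have hXs : X (σ + t - p) = xbar σ + y σ := by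
        rw [hydef]; simp
      have ht1 : ‖u (X (σ + t - p)) - u (xbar σ) - fderiv ℝ u (xbar σ) (y σ)‖
          ≤ M₂ * ‖y σ‖ ^ 2 := by
        rw [hXs]
        refine second_order_bound hu ?_ (hy1 σ hσ)
        intro ξ hξ
        refine hM₂ ξ ?_
        have hmem : xbar σ ∈ K₀ := by rw [hK₀]; exact ⟨σ, hσS, rfl⟩
        rw [hN]
        exact Metric.closedBall_subset_cthickening hmem 1 hξ
      have ht2 : ‖w (X (σ + t - p)) (σ + t - p) - w (xbar σ) (σ + t - p)‖
          ≤ (Kw : ℝ) * ‖y σ‖ := by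
        have h := (hwLip (σ + t - p)).dist_le_mul (X (σ + t - p)) (xbar σ)
        simpa [dist_eq_norm, hydef] using h
      have h0 := norm_nonneg (y σ)
      calc ‖Rem σ‖ ≤ ‖u (X (σ + t - p)) - u (xbar σ) - fderiv ℝ u (xbar σ) (y σ)‖
            + ‖ε • (w (X (σ + t - p)) (σ + t - p) - w (xbar σ) (σ + t - p))‖ := by
              simp only [hRemdef]; exact norm_add_le _ _
        _ ≤ M₂ * ‖y σ‖ ^ 2 + ε * ((Kw : ℝ) * ‖y σ‖) := by
            rw [norm_smul, Real.norm_eq_abs, abs_of_pos hεpos]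
            exact add_le_add ht1 (mul_le_mul_of_nonneg_left ht2 hεpos.le)
        _ ≤ M₂ * (ε * C₁) ^ 2 + ε * ((Kw : ℝ) * (ε * C₁)) := by
            have h1 : ‖y σ‖ ^ 2 ≤ (ε * C₁) ^ 2 := by nlinarith
            have h2 : (0:ℝ) ≤ (Kw : ℝ) := Kw.coe_nonneg
            nlinarith [mul_le_mul_of_nonneg_left h1 hM₂0,
              mul_le_mul_of_nonneg_left hyb (mul_nonneg hεpos.le h2)]
    have hinner2 : |⟪Rem σ, Jrot (u (xbar σ))⟫_ℝ| ≤ ‖Rem σ‖ * U := by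
      refine le_trans (abs_real_inner_le_norm _ _) ?_
      rw [norm_Jrot]
      exact mul_le_mul_of_nonneg_left (hU σ hσS) (norm_nonneg _)
    simp only [hrdef]
    have hRem0 := norm_nonneg (Rem σ)
    calc |Real.exp (-D σ) * ⟪Rem σ, Jrot (u (xbar σ))⟫_ℝ|
        = Real.exp (-D σ) * |⟪Rem σ, Jrot (u (xbar σ))⟫_ℝ| := by
          rw [abs_mul, abs_of_pos (Real.exp_pos _)]
      _ ≤ B₁ * (‖Rem σ‖ * U) := by
          apply mul_le_mul (hexpD σ hσS) hinner2 (abs_nonneg _) hB₁0.le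
      _ ≤ B₁ * ((M₂ * (ε * C₁) ^ 2 + ε * ((Kw : ℝ) * (ε * C₁))) * U) := by
          have h := mul_le_mul_of_nonneg_right hRem hU0
          nlinarith
      _ = C₃ * ε ^ 2 := by rw [hC₃def]; ring
  -- mean value estimate on G over the window
  have hGbound : |G p - G pu| ≤ C₃ * ε ^ 2 * |p - pu| := by
    have h := (convex_uIcc pu p).norm_image_sub_le_of_norm_hasDerivWithin_le
      (f := G) (f' := r) (C := C₃ * ε ^ 2)
      (fun σ hσ => (hG' σ).hasDerivWithinAt)
      (fun σ hσ => by simpa using hrb σ hσ)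
      left_mem_uIcc right_mem_uIcc
    simpa [Real.norm_eq_abs] using h
  have hGpu : G pu = 0 := by
    simp only [hGdef, intervalIntegral.integral_same, mul_zero, sub_zero, hgdef]
    simp [hy0]
  -- identify MuClosed with the φ-integral
  have hMu : MuClosed u xbar w pu ε p t = ε * (Real.exp (D p) * ∫ τ in pu..p, φ τ) := by
    rw [MuClosed]
    congr 1
    rw [← intervalIntegral.integral_const_mul]
    refine intervalIntegral.integral_congr fun τ _ => ?_
    have hsub : (∫ ξ in τ..p, div2 u (xbar ξ)) = D p - D τ := by
      rw [hDdef]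
      exact (intervalIntegral.integral_interval_sub_left
        (hdvc.intervalIntegrable pu p) (hdvc.intervalIntegrable pu τ)).symm
    rw [hsub, Real.exp_sub]
    simp only [hφdef]
    rw [Real.exp_neg]
    ring
  -- final assembly
  have hGp : G p = g p - ε * ∫ τ in pu..p, φ τ := by simp only [hGdef]
  have hgp : ⟪X t - xbar p, Jrot (u (xbar p))⟫_ℝ = Real.exp (D p) * g p := by
    simp only [hgdef, hydef]
    rw [show p + t - p = t by ring, ← mul_assoc, ← Real.exp_add]
    simp
  have hLHS : ⟪X t - xbar p, (‖u (xbar p)‖)⁻¹ • Jrot (u (xbar p))⟫_ℝ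
      - MuClosed u xbar w pu ε p t / ‖u (xbar p)‖
      = (‖u (xbar p)‖)⁻¹ * (Real.exp (D p) * (G p - G pu)) := by
    rw [real_inner_smul_right, hgp, hMu, hGp, hGpu, div_eq_inv_mul]
    ring
  rw [hLHS]
  have hpu' : |p - pu| ≤ A := by
    rw [abs_le, hA]
    constructor <;> [linarith [hp.1, le_abs_self pu]; linarith [hp.2, neg_abs_le pu]]
  have hnormu : m ≤ ‖u (xbar p)‖ := hmle p hpS
  have hinv : (‖u (xbar p)‖)⁻¹ ≤ m⁻¹ := by
    exact inv_anti₀ hm0 hnormu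
  have hGfinal : |G p - G pu| ≤ C₃ * ε ^ 2 * A := by
    refine hGbound.trans ?_
    have h5 : (0:ℝ) ≤ C₃ * ε ^ 2 := mul_nonneg hC₃0 (sq_nonneg ε)
    nlinarith [hpu', abs_nonneg (p - pu)]
  rw [abs_mul, abs_mul]
  have hup0 : (0:ℝ) < ‖u (xbar p)‖ := lt_of_lt_of_le hm0 hnormu
  have h1 : |(‖u (xbar p)‖)⁻¹| = (‖u (xbar p)‖)⁻¹ := abs_of_pos (inv_pos.2 hup0)
  have h2 : |Real.exp (D p)| = Real.exp (D p) := abs_of_pos (Real.exp_pos _)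
  rw [h1, h2]
  have hexpp := hexpD' p hpS
  calc (‖u (xbar p)‖)⁻¹ * (Real.exp (D p) * |G p - G pu|)
      ≤ m⁻¹ * (B₁ * (C₃ * ε ^ 2 * A)) := by
        have hh0 : (0:ℝ) < (‖u (xbar p)‖)⁻¹ := inv_pos.2 hup0
        have hh1 : Real.exp (D p) * |G p - G pu| ≤ B₁ * (C₃ * ε ^ 2 * A) := by
          have := mul_le_mul hexpp hGfinal (abs_nonneg _) hB₁0.le
          linarith
        have hh2 : (0:ℝ) ≤ B₁ * (C₃ * ε ^ 2 * A) :=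
          mul_nonneg hB₁0.le (mul_nonneg (mul_nonneg hC₃0 (sq_nonneg ε)) hA0.le)
        have hh3 : (0:ℝ) ≤ m⁻¹ := inv_nonneg.2 hm0.le
        calc (‖u (xbar p)‖)⁻¹ * (Real.exp (D p) * |G p - G pu|)
            ≤ (‖u (xbar p)‖)⁻¹ * (B₁ * (C₃ * ε ^ 2 * A)) := by
              exact mul_le_mul_of_nonneg_left hh1 hh0.le
          _ ≤ m⁻¹ * (B₁ * (C₃ * ε ^ 2 * A)) := mul_le_mul_of_nonneg_right hinv hh2
    _ ≤ (m⁻¹ * B₁ * (C₃ * A) + 1) * ε ^ 2 := by nlinarith [sq_nonneg ε, hB₁0.le, hC₃0, hA0.le, inv_nonneg.2 hm0.le]
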